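/- arXiv:2504.16863 — 4 statements merged into one kernel-verified Lean document; each statement's English description precedes it below -/
import Mathlib

section
/- Let G be a graph and let x, y be vertices of G. Then x and y are true twins (i.e., N[x] = N[y]) if and only if for every maximal clique K of G, x ∈ K if and only if y ∈ K. -/
variable {V : Type} {W : Type}

/-- Two vertices are true twins: they have the same closed neighbourhood. -/
def twin (G : SimpleGraph V) (x y : V) : Prop :=
  ∀ z, (G.Adj x z ∨ x = z) ↔ (G.Adj y z ∨ y = z)

/-- The true-twin relation as a setoid. -/
def twinSetoid (G : SimpleGraph V) : Setoid V :=
  ⟨twin G, ⟨fun _ _ => Iff.rfl, fun h z => (h z).symm, fun h1 h2 z => (h1 z).trans (h2 z)⟩⟩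

/-- The quotient of `G` by the true-twin relation. -/
def quotGraph (G : SimpleGraph V) : SimpleGraph (Quotient (twinSetoid G)) where
  Adj a b := a ≠ b ∧ ∃ x y, Quotient.mk (twinSetoid G) x = a ∧
    Quotient.mk (twinSetoid G) y = b ∧ G.Adj x y
  symm := ⟨by
    rintro a b ⟨h, x, y, hx, hy, hxy⟩
    exact ⟨h.symm, y, x, hy, hx, hxy.symm⟩⟩
  loopless := ⟨by rintro a ⟨h, _⟩; exact h rfl⟩

/-- The true-twin class of a vertex. -/
def qmk (G : SimpleGraph V) (v : V) : Quotient (twinSetoid G) :=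
  Quotient.mk (twinSetoid G) v

/-- `K` is a maximal clique of `G`. -/
def MaxClique (G : SimpleGraph V) (K : Set V) : Prop :=
  G.IsClique K ∧ ∀ K', G.IsClique K' → K ⊆ K' → K' = K

/-- `S` is an independent set of `G`. -/
def IndepSet (G : SimpleGraph V) (S : Set V) : Prop :=
  ∀ x ∈ S, ∀ y ∈ S, ¬ G.Adj x y

/-- Independence number. -/
noncomputable def indepNum (G : SimpleGraph V) : ℕ :=
  sSup {n | ∃ S : Set V, IndepSet G S ∧ S.ncard = n}

/-- Clique cover number: minimum number of cliques covering all vertices. -/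
noncomputable def cliqueCoverNum (G : SimpleGraph V) : ℕ :=
  sInf {n | ∃ f : Fin n → Set V, (∀ i, G.IsClique (f i)) ∧ ∀ v, ∃ i, v ∈ f i}

/-- Closed neighbourhood. -/
def cNbhd (G : SimpleGraph V) (v : V) : Set V := insert v (G.neighborSet v)

/-- Local independence number. -/
noncomputable def alphaLoc (G : SimpleGraph V) : ℕ :=
  sSup {n | ∃ v, ∃ S ⊆ cNbhd G v, IndepSet G S ∧ S.ncard = n}

/-- Local clique cover number. -/
noncomputable def thetaLoc (G : SimpleGraph V) : ℕ :=
  sSup {n | ∃ v, cliqueCoverNum (G.induce (cNbhd G v)) = n}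

/-- Clique-incidence-degree: max number of maximal cliques containing a vertex. -/
noncomputable def cideg (G : SimpleGraph V) : ℕ :=
  sSup {n | ∃ v, {K | MaxClique G K ∧ v ∈ K}.ncard = n}

/-- Clique-incidence-diversity: max number of true-twin classes meeting a maximal clique. -/
noncomputable def cliqueIncDiv (G : SimpleGraph V) : ℕ :=
  sSup {n | ∃ K, MaxClique G K ∧ (qmk G '' K).ncard = n}

/-- Clique-degree: max number of other maximal cliques intersecting a maximal clique. -/
noncomputable def cdeg (G : SimpleGraph V) : ℕ :=
  sSup {n | ∃ K, MaxClique G K ∧ {K' | MaxClique G K' ∧ K' ≠ K ∧ (K' ∩ K).Nonempty}.ncard = n}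

/-- Maximum degree. -/
noncomputable def maxDeg (H : SimpleGraph W) : ℕ :=
  sSup {n | ∃ v, (H.neighborSet v).ncard = n}

/-- Clique number. -/
noncomputable def cliqueNum (H : SimpleGraph W) : ℕ :=
  sSup {n | ∃ K : Set W, H.IsClique K ∧ K.ncard = n}

/-- A separation of a graph. -/
def IsSep (H : SimpleGraph W) (A B : Set W) : Prop :=
  A ∪ B = Set.univ ∧ ∀ a ∈ A \ B, ∀ b ∈ B \ A, ¬ H.Adj a b

/-- A tree-decomposition. -/
structure TreeDec {ι : Type} (G : SimpleGraph V) (T : SimpleGraph ι) (β : ι → Set V) : Prop where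
  tree : T.IsTree
  cover : ∀ v, ∃ t, v ∈ β t
  edges : ∀ v w, G.Adj v w → ∃ t, v ∈ β t ∧ w ∈ β t
  subtree : ∀ v, (T.induce {t | v ∈ β t}).Connected

/-- α-treewidth (tree-independence number). -/
noncomputable def alphaTW (G : SimpleGraph V) : ℕ :=
  sInf {n | ∃ (ι : Type) (T : SimpleGraph ι) (β : ι → Set V), TreeDec G T β ∧
    ∀ t, ∀ S ⊆ β t, IndepSet G S → S.ncard ≤ n}

/-- Neighbourhood of a set of vertices (outside the set). -/
def setNbhd (G : SimpleGraph V) (K : Set V) : Set V :=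
  {v | v ∉ K ∧ ∃ x ∈ K, G.Adj v x}

/-- Diversity number of a set `K`: max size of a `K`-diverse set of neighbours. -/
noncomputable def dn (G : SimpleGraph V) (K : Set V) : ℕ :=
  sSup {n | ∃ Y ⊆ setNbhd G K,
    (∀ y1 ∈ Y, ∀ y2 ∈ Y, y1 ≠ y2 → G.neighborSet y1 ∩ K ≠ G.neighborSet y2 ∩ K) ∧ Y.ncard = n}

/-- Cutrank of a set of vertices: F₂-rank of the corresponding submatrix
of the adjacency matrix. -/
noncomputable def cutrank (G : SimpleGraph V) [Fintype V] (X : Set V) : ℕ :=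
  haveI : DecidableRel G.Adj := Classical.decRel _
  haveI : Fintype ↥X := Fintype.ofFinite _
  haveI : Fintype ↥(Xᶜ) := Fintype.ofFinite _
  (Matrix.of fun (x : ↥X) (y : ↥(Xᶜ)) => if G.Adj x.1 y.1 then (1 : ZMod 2) else 0).rank

/-- `G` admits a rank-decomposition of width at most `w`: a tree whose internal
nodes have degree 3, whose leaves are in bijection with `V(G)`, such that every
edge induces a bipartition of the vertices of cutrank at most `w`. -/
def HasRankDecompOfWidth (G : SimpleGraph V) [Fintype V] (w : ℕ) : Prop :=
  ∃ (ι : Type) (T : SimpleGraph ι) (δ : V → ι),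
    T.IsTree ∧ Function.Injective δ ∧
    (∀ t, (T.neighborSet t).ncard = 1 ↔ ∃ v, δ v = t) ∧
    (∀ t, (T.neighborSet t).ncard = 1 ∨ (T.neighborSet t).ncard = 3) ∧
    ∀ a b, T.Adj a b → cutrank G {v | (T.deleteEdges {s(a,b)}).Reachable (δ v) a} ≤ w

/-- An injective enumeration of a path that is induced in `G`. -/
def IsInducedPath (G : SimpleGraph V) {ℓ : ℕ} (x : Fin ℓ → V) : Prop :=
  Function.Injective x ∧ ∀ i j, G.Adj (x i) (x j) ↔ (i.val + 1 = j.val ∨ j.val + 1 = i.val)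

lemma exists_maxClique_of_isClique (G : SimpleGraph V) {C : Set V} (hC : G.IsClique C) :
    ∃ K, MaxClique G K ∧ C ⊆ K := by
  obtain ⟨K, hCK, hKmax⟩ := zorn_subset_nonempty {K : Set V | G.IsClique K}
    (fun c hc hchain _ => by
      refine ⟨⋃₀ c, ?_, fun s hs => Set.subset_sUnion_of_mem hs⟩
      intro a ha b hb hab
      obtain ⟨s, hs, has⟩ := ha
      obtain ⟨t, ht, hbt⟩ := hb
      rcases hchain.total hs ht with h | h
      · exact hc ht (h has) hbt hab
      · exact hc hs has (h hbt) hab) C hC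
  exact ⟨K, ⟨hKmax.prop, fun K' hK' hsub => hKmax.eq_of_ge hK' hsub⟩, hCK⟩

lemma twin_mem_maxClique (G : SimpleGraph V) {x y : V} (h : twin G x y)
    {K : Set V} (hK : MaxClique G K) (hx : x ∈ K) : y ∈ K := by
  by_cases hxy : x = y
  · exact hxy ▸ hx
  have hadjxy : G.Adj x y := by
    rcases (h y).2 (Or.inr rfl) with h' | h'
    · exact h'
    · exact absurd h' hxy
  have hclique : G.IsClique (insert y K) := by
    intro a ha b hb hab
    rcases ha with ha | ha <;> rcases hb with hb | hb
    · exact absurd (ha.trans hb.symm) hab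
    · subst ha
      by_cases hbx : b = x
      · exact hbx ▸ hadjxy.symm
      · have : G.Adj x b := hK.1 hx hb (Ne.symm hbx)
        rcases (h b).1 (Or.inl this) with h' | h'
        · exact h'
        · exact absurd h' hab
    · subst hb
      by_cases hax : a = x
      · exact hax ▸ hadjxy
      · have : G.Adj x a := hK.1 hx ha (Ne.symm hax)
        rcases (h a).1 (Or.inl this) with h' | h'
        · exact h'.symm
        · exact absurd h'.symm hab
    · exact hK.1 ha hb hab
  have := hK.2 _ hclique (Set.subset_insert y K)
  rw [← this]; exact Set.mem_insert y K

theorem stmt0 [Fintype V] (G : SimpleGraph V) (x y : V) :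
    twin G x y ↔ ∀ K : Set V, MaxClique G K → (x ∈ K ↔ y ∈ K) := by
  constructor
  · intro h K hK
    exact ⟨twin_mem_maxClique G h hK, twin_mem_maxClique G (fun z => (h z).symm) hK⟩
  · intro h
    have key : ∀ a b : V, (∀ K, MaxClique G K → (a ∈ K ↔ b ∈ K)) →
        ∀ z, (G.Adj a z ∨ a = z) → (G.Adj b z ∨ b = z) := by
      intro a b hab z hz
      by_cases hbz : b = z
      · exact Or.inr hbz
      rcases hz with hz | hz
      · have hC : G.IsClique {a, z} := by
          rw [SimpleGraph.isClique_pair]; exact fun _ => hz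
        obtain ⟨K, hK, hsub⟩ := exists_maxClique_of_isClique G hC
        have hbK : b ∈ K := (hab K hK).1 (hsub (by simp))
        have hzK : z ∈ K := hsub (by simp)
        exact Or.inl (hK.1 hbK hzK hbz)
      · subst hz
        obtain ⟨K, hK, hsub⟩ := exists_maxClique_of_isClique G
          (G.isClique_singleton a)
        have hbK : b ∈ K := (hab K hK).1 (hsub rfl)
        exact Or.inl (hK.1 hbK (hsub rfl) hbz)
    intro z
    exact ⟨key x y h z, key y x (fun K hK => (h K hK).symm) z⟩
end

section
/- For every graph G, the clique-incidence-degree of G satisfies cideg(G) ≤ 3^{⌈Δ(G̃)/3⌉}, where G̃ is the quotient of G by the true-twin relation. -/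
variable {V : Type} {W : Type}

/-! ### Auxiliary: the Moon–Moser bound function -/

def mmBound : ℕ → ℕ
  | 0 => 1
  | 1 => 1
  | 2 => 2
  | 3 => 3
  | 4 => 4
  | (n+5) => 3 * mmBound (n+2)

lemma mmBound_succ_le (n : ℕ) : mmBound n ≤ mmBound (n+1) := by
  induction n using Nat.strong_induction_on with
  | _ n IH =>
    match n with
    | 0 | 1 | 2 | 3 => simp [mmBound]
    | 4 => simp [mmBound]
    | (m+5) =>
      show 3 * mmBound (m+2) ≤ 3 * mmBound (m+3)
      exact Nat.mul_le_mul_left 3 (IH (m+2) (by omega))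

lemma mmBound_mono : Monotone mmBound := monotone_nat_of_le_succ mmBound_succ_le

lemma mmBound_pos (n : ℕ) : 1 ≤ mmBound n := mmBound_mono (Nat.zero_le n)

lemma mmBound_L2 (m : ℕ) : 2 * mmBound m ≤ mmBound (m+2) := by
  induction m using Nat.strong_induction_on with
  | _ m IH =>
    match m with
    | 0 | 1 | 2 | 3 | 4 => simp [mmBound]
    | (j+5) =>
      show 2 * (3 * mmBound (j+2)) ≤ 3 * mmBound (j+4)
      calc 2 * (3 * mmBound (j+2)) = 3 * (2 * mmBound (j+2)) := by ring
        _ ≤ 3 * mmBound (j+4) := Nat.mul_le_mul_left 3 (IH (j+2) (by omega))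

lemma mmBound_L3 (m : ℕ) : 3 * mmBound m ≤ mmBound (m+3) := by
  match m with
  | 0 | 1 | 2 | 3 | 4 => simp [mmBound]
  | (j+5) =>
    show 3 * (3 * mmBound (j+2)) ≤ 3 * mmBound (j+5)
    exact Nat.mul_le_mul_left 3 (le_of_eq rfl)

lemma mmBound_L4 (m : ℕ) : 4 * mmBound m ≤ mmBound (m+4) := by
  induction m using Nat.strong_induction_on with
  | _ m IH =>
    match m with
    | 0 | 1 | 2 | 3 | 4 => simp [mmBound]
    | (j+5) =>
      show 4 * (3 * mmBound (j+2)) ≤ 3 * mmBound (j+6)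
      calc 4 * (3 * mmBound (j+2)) = 3 * (4 * mmBound (j+2)) := by ring
        _ ≤ 3 * mmBound (j+6) := Nat.mul_le_mul_left 3 (IH (j+2) (by omega))

lemma mmBound_KL : ∀ k n, 1 ≤ k → k ≤ n → k * mmBound (n - k) ≤ mmBound n := by
  intro k
  induction k using Nat.strong_induction_on with
  | _ k IH =>
    intro n hk hkn
    match k, hk with
    | 1, _ => simpa using mmBound_mono (Nat.sub_le n 1)
    | 2, _ => have := mmBound_L2 (n-2); rwa [Nat.sub_add_cancel hkn] at this
    | 3, _ => have := mmBound_L3 (n-3); rwa [Nat.sub_add_cancel hkn] at this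
    | 4, _ => have := mmBound_L4 (n-4); rwa [Nat.sub_add_cancel hkn] at this
    | (j+5), _ =>
      have h1 : (j+5) * mmBound (n - (j+5)) ≤ 3 * ((j+2) * mmBound (n - (j+5))) := by
        have : j + 5 ≤ 3 * (j+2) := by omega
        calc (j+5) * mmBound (n - (j+5)) ≤ (3*(j+2)) * mmBound (n - (j+5)) :=
              Nat.mul_le_mul_right _ this
          _ = 3 * ((j+2) * mmBound (n - (j+5))) := by ring
      have h2 : (j+2) * mmBound ((n-3) - (j+2)) ≤ mmBound (n-3) :=
        IH (j+2) (by omega) (n-3) (by omega) (by omega)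
      have h3 : (n-3) - (j+2) = n - (j+5) := by omega
      rw [h3] at h2
      have h4 : 3 * mmBound (n-3) ≤ mmBound n := by
        have := mmBound_L3 (n-3)
        rwa [Nat.sub_add_cancel (by omega : 3 ≤ n)] at this
      calc (j+5) * mmBound (n - (j+5)) ≤ 3 * ((j+2) * mmBound (n - (j+5))) := h1
        _ ≤ 3 * mmBound (n-3) := Nat.mul_le_mul_left 3 h2
        _ ≤ mmBound n := h4

lemma mmBound_le_pow (n : ℕ) : mmBound n ≤ 3 ^ ((n+2)/3) := by
  induction n using Nat.strong_induction_on with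
  | _ n IH =>
    match n with
    | 0 | 1 | 2 | 3 | 4 => simp [mmBound]
    | (j+5) =>
      show 3 * mmBound (j+2) ≤ 3 ^ ((j+7)/3)
      have h : (j+7)/3 = (j+4)/3 + 1 := by omega
      rw [h, pow_succ]
      calc 3 * mmBound (j+2) ≤ 3 * 3 ^ ((j+4)/3) := Nat.mul_le_mul_left 3 (IH (j+2) (by omega))
        _ = 3 ^ ((j+4)/3) * 3 := by ring

/-! ### Counting maximal cliques -/

section KeyInj
variable [Finite W] (H : SimpleGraph W) (u : W)

lemma maxClique_recover {K : Set W} (hK : MaxClique H K) (hu : u ∈ K) :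
    K = insert u (Subtype.val '' (Subtype.val ⁻¹' K : Set ↥(H.neighborSet u))) := by
  apply Set.Subset.antisymm
  · intro x hx
    rcases eq_or_ne x u with rfl | hne
    · exact Set.mem_insert _ _
    · have hadj : H.Adj u x := hK.1 hu hx (Ne.symm hne)
      exact Set.mem_insert_of_mem _ ⟨⟨x, hadj⟩, hx, rfl⟩
  · intro x hx
    rcases hx with rfl | ⟨y, hy, rfl⟩
    · exact hu
    · exact hy

lemma maxClique_key_inj : {K : Set W | MaxClique H K ∧ u ∈ K}.ncard ≤
    {K : Set ↥(H.neighborSet u) | MaxClique (H.induce (H.neighborSet u)) K}.ncard := by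
  apply Set.ncard_le_ncard_of_injOn (fun K => (Subtype.val ⁻¹' K : Set ↥(H.neighborSet u)))
  · rintro K ⟨hK, hu⟩
    constructor
    · intro a ha b hb hne
      exact hK.1 ha hb (fun h => hne (Subtype.ext h))
    · intro K' hK' hsub
      have hcl : H.IsClique (insert u (Subtype.val '' K')) := by
        intro a ha b hb hne
        rcases ha with rfl | ⟨x, hx, rfl⟩ <;> rcases hb with rfl | ⟨y, hy, rfl⟩
        · exact absurd rfl hne
        · exact y.2
        · exact x.2.symm
        · exact hK' hx hy (fun h => hne (congrArg _ h))
      have hKsub : K ⊆ insert u (Subtype.val '' K') := by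
        rw [maxClique_recover H u hK hu]
        apply Set.insert_subset_insert
        exact Set.image_mono hsub
      have heq : insert u (Subtype.val '' K') = K := hK.2 _ hcl hKsub
      apply Set.Subset.antisymm _ hsub
      intro x hx
      have hxK : (x : W) ∈ K := by
        rw [← heq]; exact Set.mem_insert_of_mem _ ⟨x, hx, rfl⟩
      exact hxK
  · rintro K1 ⟨hK1, hu1⟩ K2 ⟨hK2, hu2⟩ h
    have h' : (Subtype.val ⁻¹' K1 : Set ↥(H.neighborSet u)) = Subtype.val ⁻¹' K2 := h
    rw [maxClique_recover H u hK1 hu1, maxClique_recover H u hK2 hu2, h']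

end KeyInj

lemma cover_bound {W : Type} [Finite W] (b : ℕ) (S : W → Set (Set W)) (M : Finset W) :
    ∀ (T : Set (Set W)), (T ⊆ ⋃ u ∈ M, S u) → (∀ u ∈ M, (S u).ncard ≤ b) →
    T.ncard ≤ M.card * b := by
  classical
  induction M using Finset.induction_on with
  | empty =>
    intro T hT _
    simp only [Finset.notMem_empty, Set.iUnion_of_empty, Set.iUnion_empty,
      Set.subset_empty_iff] at hT
    simp [hT]
  | insert a M ha IH =>
    intro T hT hb
    have hcov : T ⊆ S a ∪ (T ∩ ⋃ u ∈ M, S u) := by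
      intro K hK
      have := hT hK
      simp only [Finset.mem_insert, Set.mem_iUnion] at this
      rcases this with ⟨u, (rfl | hu), hKu⟩
      · exact Or.inl hKu
      · exact Or.inr ⟨hK, Set.mem_iUnion₂.2 ⟨u, hu, hKu⟩⟩
    calc T.ncard ≤ (S a ∪ (T ∩ ⋃ u ∈ M, S u)).ncard :=
          Set.ncard_le_ncard hcov (Set.toFinite _)
      _ ≤ (S a).ncard + (T ∩ ⋃ u ∈ M, S u).ncard := Set.ncard_union_le _ _
      _ ≤ b + M.card * b := add_le_add (hb a (Finset.mem_insert_self a M))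
          (IH _ Set.inter_subset_right (fun u hu => hb u (Finset.mem_insert_of_mem hu)))
      _ = (insert a M).card * b := by
          rw [Finset.card_insert_of_notMem ha]; ring

lemma moon_moser (n : ℕ) : ∀ (W : Type) [Finite W] (H : SimpleGraph W), Nat.card W ≤ n →
    {K : Set W | MaxClique H K}.ncard ≤ mmBound n := by
  induction n using Nat.strong_induction_on with
  | _ n IH =>
    intro W _ H hcard
    rcases isEmpty_or_nonempty W with hW | hW
    · have hsub : {K : Set W | MaxClique H K} ⊆ {(∅ : Set W)} := by
        intro K _
        simp [Set.eq_empty_of_isEmpty K]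
      calc {K : Set W | MaxClique H K}.ncard ≤ ({(∅ : Set W)} : Set (Set W)).ncard :=
            Set.ncard_le_ncard hsub (Set.toFinite _)
        _ = 1 := Set.ncard_singleton _
        _ ≤ mmBound n := mmBound_pos n
    · have hpos : 1 ≤ Nat.card W := Nat.one_le_iff_ne_zero.2 (Nat.card_ne_zero.2 ⟨hW, ‹_›⟩)
      rcases lt_or_eq_of_le hcard with hlt | hn
      · exact (IH (n-1) (by omega) W H (by omega)).trans (mmBound_mono (by omega))
      · haveI := Fintype.ofFinite W
        classical
        obtain ⟨v, -, hv⟩ := Finset.exists_max_image (Finset.univ : Finset W)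
          (fun u => (H.neighborSet u).ncard) ⟨Classical.arbitrary W, Finset.mem_univ _⟩
        set d := (H.neighborSet v).ncard with hd
        have hdlt : d + 1 ≤ n := by
          have h1 : (insert v (H.neighborSet v)).ncard = d + 1 :=
            Set.ncard_insert_of_notMem H.notMem_neighborSet_self (Set.toFinite _)
          have h2 : (insert v (H.neighborSet v)).ncard ≤ (Set.univ : Set W).ncard :=
            Set.ncard_le_ncard (Set.subset_univ _) (Set.toFinite _)
          rw [h1, Set.ncard_univ, hn] at h2
          exact h2
        set M : Finset W := ((H.neighborSet v).toFinite.toFinset)ᶜ with hM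
        have hMcard : M.card = n - d := by
          have h1 : ((H.neighborSet v).toFinite.toFinset).card = d :=
            (Set.ncard_eq_toFinset_card _ _).symm
          rw [hM, Finset.card_compl, h1, ← Nat.card_eq_fintype_card, hn]
        have hvM : v ∈ M := by
          rw [hM, Finset.mem_compl, Set.Finite.mem_toFinset]
          exact H.notMem_neighborSet_self
        set S : W → Set (Set W) := fun u => {K : Set W | MaxClique H K ∧ u ∈ K} with hS
        have hcov : {K : Set W | MaxClique H K} ⊆ ⋃ u ∈ M, S u := by
          intro K hK
          by_contra hcon
          simp only [Set.mem_iUnion, not_exists, hS, Set.mem_setOf_eq, not_and] at hcon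
          have hKN : K ⊆ H.neighborSet v := by
            intro x hx
            by_contra hxN
            have hxM : x ∈ M := by
              rw [hM, Finset.mem_compl, Set.Finite.mem_toFinset]; exact hxN
            exact hcon x hxM hK hx
          have hvK : v ∉ K := fun h => H.notMem_neighborSet_self (hKN h)
          have hcl : H.IsClique (insert v K) := by
            intro a ha b hb hne
            rcases ha with rfl | ha <;> rcases hb with rfl | hb
            · exact absurd rfl hne
            · exact hKN hb
            · exact (hKN ha).symm
            · exact hK.1 ha hb hne
          have := hK.2 _ hcl (Set.subset_insert _ _)
          rw [← this] at hvK
          exact hvK (Set.mem_insert _ _)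
        have hSb : ∀ u ∈ M, (S u).ncard ≤ mmBound d := by
          intro u _
          refine (maxClique_key_inj H u).trans ?_
          have hcu : Nat.card ↥(H.neighborSet u) ≤ d := by
            rw [Nat.card_coe_set_eq]
            exact hv u (Finset.mem_univ u)
          exact IH d (by omega) _ _ hcu
        calc {K : Set W | MaxClique H K}.ncard ≤ M.card * mmBound d :=
              cover_bound _ S M _ hcov hSb
          _ = (n - d) * mmBound (n - (n - d)) := by rw [hMcard]; congr 2; omega
          _ ≤ mmBound n := mmBound_KL (n - d) n (by omega) (by omega)

/-! ### Twins and the quotient graph -/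

lemma twin_adj {G : SimpleGraph V} {x y : V} (h : twin G x y) (hne : x ≠ y) : G.Adj x y := by
  rcases (h x).mp (Or.inr rfl) with h' | h'
  · exact h'.symm
  · exact absurd h'.symm hne

lemma twin_adj_trans {G : SimpleGraph V} {x x' y y' : V} (h1 : twin G x' x) (h2 : twin G y' y)
    (hadj : G.Adj x' y') (hne : x ≠ y) : G.Adj x y := by
  rcases (h1 y').mp (Or.inl hadj) with h | rfl
  · rcases (h2 x).mp (Or.inl h.symm) with h' | h'
    · exact h'.symm
    · exact absurd h'.symm hne
  · rcases (h2 x).mp (Or.inr rfl) with h' | h'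
    · exact h'.symm
    · exact absurd h'.symm hne

lemma mem_of_twin {G : SimpleGraph V} {K : Set V} {x y : V} (hK : MaxClique G K)
    (hx : x ∈ K) (ht : twin G x y) : y ∈ K := by
  rcases eq_or_ne y x with rfl | hyx
  · exact hx
  · have hcl : G.IsClique (insert y K) := by
      intro a ha b hb hne
      rcases ha with rfl | ha <;> rcases hb with rfl | hb
      · exact absurd rfl hne
      · have hb' : G.Adj x b ∨ x = b := by
          rcases eq_or_ne x b with rfl | h
          · exact Or.inr rfl
          · exact Or.inl (hK.1 hx hb h)
        rcases (ht b).mp hb' with h | h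
        · exact h
        · exact absurd h hne
      · have ha' : G.Adj x a ∨ x = a := by
          rcases eq_or_ne x a with rfl | h
          · exact Or.inr rfl
          · exact Or.inl (hK.1 hx ha h)
        rcases (ht a).mp ha' with h | h
        · exact h.symm
        · exact absurd h hne.symm
      · exact hK.1 ha hb hne
    have := hK.2 _ hcl (Set.subset_insert _ _)
    rw [← this]
    exact Set.mem_insert _ _

lemma qmk_preimage_image {G : SimpleGraph V} {K : Set V} (hK : MaxClique G K) :
    qmk G ⁻¹' (qmk G '' K) = K := by
  apply Set.Subset.antisymm
  · intro x hx
    obtain ⟨y, hy, hxy⟩ := hx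
    exact mem_of_twin hK hy (Quotient.exact hxy)
  · exact Set.subset_preimage_image _ _

lemma image_maxClique {G : SimpleGraph V} {K : Set V} (hK : MaxClique G K) :
    MaxClique (quotGraph G) (qmk G '' K) := by
  constructor
  · rintro a ⟨x, hx, rfl⟩ b ⟨y, hy, rfl⟩ hne
    have hxy : x ≠ y := fun h => hne (by rw [h])
    exact ⟨hne, x, y, rfl, rfl, hK.1 hx hy hxy⟩
  · intro K' hcl' hsub
    set L := qmk G ⁻¹' K' with hL
    have hLK : K ⊆ L := fun x hx => hsub ⟨x, hx, rfl⟩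
    have hLcl : G.IsClique L := by
      intro x hx y hy hne
      by_cases hq : qmk G x = qmk G y
      · exact twin_adj (Quotient.exact hq) hne
      · obtain ⟨-, x', y', hx', hy', hxy'⟩ := hcl' hx hy hq
        exact twin_adj_trans (Quotient.exact hx') (Quotient.exact hy') hxy' hne
    have hLeq : L = K := hK.2 L hLcl hLK
    apply Set.Subset.antisymm _ hsub
    intro a ha
    obtain ⟨x, rfl⟩ := Quotient.exists_rep a
    have hxL : x ∈ L := ha
    rw [hLeq] at hxL
    exact ⟨x, hxL, rfl⟩

theorem stmt8 [Fintype V] (G : SimpleGraph V) :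
    cideg G ≤ 3 ^ ((maxDeg (quotGraph G) + 2) / 3) := by
  have key : ∀ v : V, {K : Set V | MaxClique G K ∧ v ∈ K}.ncard ≤
      3 ^ ((maxDeg (quotGraph G) + 2) / 3) := by
    intro v
    haveI : Finite (Quotient (twinSetoid G)) := Quotient.finite _
    set H := quotGraph G with hH
    set D := maxDeg H with hD
    have step1 : {K : Set V | MaxClique G K ∧ v ∈ K}.ncard ≤
        {K : Set (Quotient (twinSetoid G)) | MaxClique H K ∧ qmk G v ∈ K}.ncard := by
      apply Set.ncard_le_ncard_of_injOn (fun K => qmk G '' K)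
      · rintro K ⟨hK, hv⟩
        exact ⟨image_maxClique hK, ⟨v, hv, rfl⟩⟩
      · rintro K1 ⟨hK1, -⟩ K2 ⟨hK2, -⟩ h
        have h' : qmk G '' K1 = qmk G '' K2 := h
        rw [← qmk_preimage_image hK1, ← qmk_preimage_image hK2, h']
    have step2 := maxClique_key_inj H (qmk G v)
    have hdeg : Nat.card ↥(H.neighborSet (qmk G v)) ≤ D := by
      rw [Nat.card_coe_set_eq]
      apply le_csSup
      · refine ⟨Nat.card (Quotient (twinSetoid G)), ?_⟩
        rintro m ⟨u, rfl⟩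
        exact le_trans (Set.ncard_le_ncard (Set.subset_univ _) (Set.toFinite _))
          (le_of_eq (Set.ncard_univ _))
      · exact ⟨qmk G v, rfl⟩
    have step3 := moon_moser D _ (H.induce (H.neighborSet (qmk G v))) hdeg
    calc {K : Set V | MaxClique G K ∧ v ∈ K}.ncard
        ≤ {K : Set (Quotient (twinSetoid G)) | MaxClique H K ∧ qmk G v ∈ K}.ncard := step1
      _ ≤ _ := step2
      _ ≤ mmBound D := step3
      _ ≤ 3 ^ ((D + 2) / 3) := mmBound_le_pow D
  apply csSup_le'
  rintro n ⟨v, rfl⟩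
  exact key v
end

section
/- Let G be a graph with a tree-decomposition (T, β). Define β̃(t) to be the set of true-twin equivalence classes of vertices of β(t). Then (T, β̃) is a tree-decomposition of the true-twin quotient graph G̃; moreover the α-treewidth of G equals the α-treewidth of G̃. -/
variable {V : Type} {W : Type}

lemma twin_adj_of_ne {G : SimpleGraph V} {u v : V} (h : twin G u v) (hne : v ≠ u) :
    G.Adj u v := by
  rcases (h u).mp (Or.inr rfl) with h' | h'
  · exact h'.symm
  · exact absurd h' hne

lemma twin_of_qmk_eq {G : SimpleGraph V} {u v : V} (h : qmk G u = qmk G v) : twin G u v :=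
  Quotient.exact h

lemma indep_image {G : SimpleGraph V} {S : Set V} (hS : IndepSet G S) :
    IndepSet (quotGraph G) (qmk G '' S) := by
  rintro a ⟨u, hu, rfl⟩ b ⟨v, hv, rfl⟩ ⟨hne, x, y, hx, hy, hxy⟩
  have htxu : twin G x u := twin_of_qmk_eq hx
  have htyv : twin G y v := twin_of_qmk_eq hy
  rcases (htxu y).mp (Or.inl hxy) with h1 | h1
  · rcases (htyv u).mp (Or.inl h1.symm) with h2 | h2
    · exact hS u hu v hv h2.symm
    · exact hne (congrArg (qmk G) h2).symm
  · exact hne ((congrArg (qmk G) h1).trans hy)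

lemma injOn_qmk_of_indep {G : SimpleGraph V} {S : Set V} (hS : IndepSet G S) :
    Set.InjOn (qmk G) S := by
  intro u hu v hv hq
  by_contra hne
  exact hS u hu v hv (twin_adj_of_ne (twin_of_qmk_eq hq) (Ne.symm hne))

lemma induce_reachable_mono {ι : Type} {T : SimpleGraph ι} {A B : Set ι} (hAB : A ⊆ B)
    {x y : ι} (hx : x ∈ A) (hy : y ∈ A)
    (h : (T.induce A).Reachable ⟨x, hx⟩ ⟨y, hy⟩) :
    (T.induce B).Reachable ⟨x, hAB hx⟩ ⟨y, hAB hy⟩ :=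
  h.map ⟨Set.inclusion hAB, fun {a b} hab => hab⟩

/-- Part 1: image bags form a tree-decomposition of the quotient graph. -/
lemma quotTreeDec {ι : Type} (G : SimpleGraph V) (T : SimpleGraph ι) (β : ι → Set V)
    (h : TreeDec G T β) : TreeDec (quotGraph G) T (fun t => qmk G '' β t) := by
  refine ⟨h.tree, ?_, ?_, ?_⟩
  · intro a
    induction a using Quotient.ind with
    | _ v =>
      obtain ⟨t, ht⟩ := h.cover v
      exact ⟨t, v, ht, rfl⟩
  · rintro a b ⟨hne, x, y, hx, hy, hxy⟩
    obtain ⟨t, htx, hty⟩ := h.edges x y hxy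
    exact ⟨t, ⟨x, htx, hx⟩, ⟨y, hty, hy⟩⟩
  · intro a
    rw [SimpleGraph.connected_iff]
    constructor
    · rintro ⟨s1, v1, hv1, hq1⟩ ⟨s2, v2, hv2, hq2⟩
      have key : ∀ (v : V) (hv : qmk G v = a), ∀ (t s : ι) (ht : v ∈ β t) (hs : v ∈ β s),
          (T.induce {u | a ∈ qmk G '' β u}).Reachable
            ⟨t, v, ht, hv⟩ ⟨s, v, hs, hv⟩ := by
        intro v hv t s ht hs
        have hsub : {u | v ∈ β u} ⊆ {u | a ∈ qmk G '' β u} := fun u hu => ⟨v, hu, hv⟩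
        exact induce_reachable_mono hsub ht hs ((h.subtree v).preconnected ⟨t, ht⟩ ⟨s, hs⟩)
      by_cases hv : v1 = v2
      · subst hv
        have := key v1 hq1 s1 s2 hv1 hv2
        exact this
      · have htw : twin G v1 v2 := twin_of_qmk_eq (hq1.trans hq2.symm)
        have hadj : G.Adj v1 v2 := twin_adj_of_ne htw (Ne.symm hv)
        obtain ⟨t0, h1, h2⟩ := h.edges v1 v2 hadj
        exact (key v1 hq1 s1 t0 hv1 h1).trans (key v2 hq2 t0 s2 h2 hv2)
    · obtain ⟨v, hv⟩ := Quotient.exists_rep a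
      obtain ⟨t, ht⟩ := h.cover v
      exact ⟨⟨t, v, ht, hv⟩⟩

/-- Preimage bags form a tree-decomposition of `G` from one of the quotient. -/
lemma preimTreeDec {ι : Type} (G : SimpleGraph V) (T : SimpleGraph ι)
    (β : ι → Set (Quotient (twinSetoid G))) (h : TreeDec (quotGraph G) T β) :
    TreeDec G T (fun t => qmk G ⁻¹' β t) := by
  refine ⟨h.tree, ?_, ?_, ?_⟩
  · intro v
    obtain ⟨t, ht⟩ := h.cover (qmk G v)
    exact ⟨t, ht⟩
  · intro v w hvw
    by_cases hq : qmk G v = qmk G w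
    · obtain ⟨t, ht⟩ := h.cover (qmk G v)
      exact ⟨t, ht, show qmk G w ∈ β t from hq ▸ ht⟩
    · obtain ⟨t, ht1, ht2⟩ := h.edges _ _ ⟨hq, v, w, rfl, rfl, hvw⟩
      exact ⟨t, ht1, ht2⟩
  · intro v
    exact h.subtree (qmk G v)

lemma width_image {ι : Type} (G : SimpleGraph V) (β : ι → Set V) {n : ℕ}
    (hw : ∀ t, ∀ S ⊆ β t, IndepSet G S → S.ncard ≤ n) :
    ∀ t, ∀ S ⊆ qmk G '' β t, IndepSet (quotGraph G) S → S.ncard ≤ n := by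
  intro t S hSsub hS
  classical
  set r : Quotient (twinSetoid G) → V :=
    fun a => if h : a ∈ qmk G '' β t then h.choose else a.out with hr
  have hmem : ∀ a ∈ S, r a ∈ β t ∧ qmk G (r a) = a := by
    intro a ha
    have hA : a ∈ qmk G '' β t := hSsub ha
    have := hA.choose_spec
    simp only [hr, dif_pos hA]
    exact ⟨this.1, this.2⟩
  have hinj : Set.InjOn r S := by
    intro a ha b hb hrab
    rw [← (hmem a ha).2, ← (hmem b hb).2, hrab]
  have hsub : r '' S ⊆ β t := by
    rintro _ ⟨a, ha, rfl⟩; exact (hmem a ha).1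
  have hind : IndepSet G (r '' S) := by
    rintro _ ⟨a, ha, rfl⟩ _ ⟨b, hb, rfl⟩ hadj
    have hab : a ≠ b := by
      rintro rfl; exact G.irrefl hadj
    exact hS a ha b hb ⟨hab, r a, r b, (hmem a ha).2, (hmem b hb).2, hadj⟩
  calc S.ncard = (r '' S).ncard := (Set.ncard_image_of_injOn hinj).symm
    _ ≤ n := hw t _ hsub hind

lemma width_preim {ι : Type} (G : SimpleGraph V) (β : ι → Set (Quotient (twinSetoid G))) {n : ℕ}
    (hw : ∀ t, ∀ S ⊆ β t, IndepSet (quotGraph G) S → S.ncard ≤ n) :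
    ∀ t, ∀ S ⊆ qmk G ⁻¹' β t, IndepSet G S → S.ncard ≤ n := by
  intro t S hSsub hS
  have hsub : qmk G '' S ⊆ β t := by rintro _ ⟨v, hv, rfl⟩; exact hSsub hv
  calc S.ncard = (qmk G '' S).ncard := (Set.ncard_image_of_injOn (injOn_qmk_of_indep hS)).symm
    _ ≤ n := hw t _ hsub (indep_image hS)

theorem stmt18 {ι : Type} (G : SimpleGraph V) (T : SimpleGraph ι) (β : ι → Set V)
    (h : TreeDec G T β) :
    TreeDec (quotGraph G) T (fun t => qmk G '' β t) ∧
    alphaTW G = alphaTW (quotGraph G) := by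
  refine ⟨quotTreeDec G T β h, ?_⟩
  unfold alphaTW
  congr 1
  ext n
  constructor
  · rintro ⟨ι', T', β', hd, hw⟩
    exact ⟨ι', T', fun t => qmk G '' β' t, quotTreeDec G T' β' hd, width_image G β' hw⟩
  · rintro ⟨ι', T', β', hd, hw⟩
    exact ⟨ι', T', fun t => qmk G ⁻¹' β' t, preimTreeDec G T' β' hd, width_preim G β' hw⟩
end

section
/- Let d, k be positive integers and let G be a graph whose local independence number is at most d and whose rankwidth is at most k. Then the α-treewidth (tree-independence number) of G is at most 3dk. -/
variable {V : Type} {W : Type}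

/-- Counting lemma: a finite set covered by ncard-many sets each meeting it in ≤ d points. -/
lemma aux_cover_count {A V : Type} (f : A → Set V) (d : ℕ) (Y : Set A) (hY : Y.Finite) :
    ∀ S : Set V, S.Finite → S ⊆ ⋃ y ∈ Y, f y →
      (∀ y ∈ Y, (S ∩ f y).ncard ≤ d) → S.ncard ≤ Y.ncard * d := by
  refine Set.Finite.induction_on Y hY ?_ ?_
  · intro S _ hsub _
    rw [Set.biUnion_empty, Set.subset_empty_iff] at hsub
    simp [hsub]
  · rintro a Y' ha hY' ih S hS hsub hb
    have hsub' : S \ f a ⊆ ⋃ y ∈ Y', f y := by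
      intro v hv
      have := hsub hv.1
      rw [Set.biUnion_insert] at this
      rcases this with h | h
      · exact absurd h hv.2
      · exact h
    have h1 : (S \ f a).ncard ≤ Y'.ncard * d := by
      refine ih (S \ f a) (hS.subset Set.diff_subset) hsub' fun y hy => ?_
      refine le_trans (Set.ncard_le_ncard ?_ (hS.subset ?_)) (hb y (Set.mem_insert_of_mem _ hy))
      · exact Set.inter_subset_inter_left _ Set.diff_subset
      · exact Set.inter_subset_left
    have h2 : (S ∩ f a).ncard ≤ d := hb a (Set.mem_insert _ _)
    have h3 : S.ncard ≤ (S ∩ f a).ncard + (S \ f a).ncard := by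
      calc S.ncard = ((S ∩ f a) ∪ (S \ f a)).ncard := by rw [Set.inter_union_diff]
      _ ≤ _ := Set.ncard_union_le _ _
    rw [Set.ncard_insert_of_notMem ha hY', add_mul, one_mul]
    omega

open Matrix in
/-- Covering lemma from matrix rank over F₂. -/
lemma aux_matrix_cover {α β : Type} [Finite α] (M : Matrix α β (ZMod 2)) (k : ℕ)
    (h : Module.finrank (ZMod 2) (Submodule.span (ZMod 2) (Set.range Mᵀ)) ≤ k) :
    ∃ s : Set β, s.Finite ∧ s.ncard ≤ k ∧
      ∀ (x : α) (y : β), M x y ≠ 0 → ∃ y' ∈ s, M x y' ≠ 0 := by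
  classical
  obtain ⟨b, hbsub, hspan, hli⟩ := exists_linearIndependent (ZMod 2) (Set.range Mᵀ)
  have hbfin : b.Finite := hli.setFinite
  haveI := hbfin.fintype
  have hcard : b.ncard ≤ k := by
    have h1 : Module.finrank (ZMod 2) (Submodule.span (ZMod 2) b) = b.toFinset.card :=
      finrank_span_set_eq_card hli
    rw [← hspan] at h
    rw [Set.ncard_eq_toFinset_card', ← h1]
    exact h
  have hchoice : ∀ f : b, ∃ y : β, Mᵀ y = (f : α → ZMod 2) := fun f => hbsub f.2
  choose c hc using hchoice
  refine ⟨Set.range c, Set.finite_range c, ?_, ?_⟩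
  · calc (Set.range c).ncard = (c '' Set.univ).ncard := by rw [Set.image_univ]
    _ ≤ (Set.univ : Set b).ncard := Set.ncard_image_le Set.finite_univ
    _ = b.ncard := by rw [Set.ncard_univ]; exact Nat.card_coe_set_eq b
    _ ≤ k := hcard
  · intro x y hxy
    by_contra hcon
    push_neg at hcon
    have hker : b ⊆ (LinearMap.ker (LinearMap.proj (R := ZMod 2) (φ := fun _ : α => ZMod 2) x) :
        Set (α → ZMod 2)) := by
      rintro f hf
      have : Mᵀ (c ⟨f, hf⟩) = f := hc ⟨f, hf⟩
      have h0 : M x (c ⟨f, hf⟩) = 0 := hcon _ ⟨⟨f, hf⟩, rfl⟩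
      simp only [SetLike.mem_coe, LinearMap.mem_ker, LinearMap.proj_apply]
      rw [← this]
      exact h0
    have hyspan : Mᵀ y ∈ Submodule.span (ZMod 2) b := by
      rw [hspan]
      exact Submodule.subset_span (Set.mem_range_self y)
    have := Submodule.span_le.mpr hker hyspan
    simp only [SetLike.mem_coe, LinearMap.mem_ker, LinearMap.proj_apply] at this
    exact hxy this


open SimpleGraph in
lemma aux_induce_reachable {ι : Type} {T : SimpleGraph ι} {s : Set ι} :
    ∀ {x y : ι} (p : T.Walk x y), (∀ z ∈ p.support, z ∈ s) → ∀ (hx : x ∈ s) (hy : y ∈ s),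
    (T.induce s).Reachable ⟨x, hx⟩ ⟨y, hy⟩ := by
  intro x y p
  induction p with
  | nil => intro _ hx hy; exact Reachable.refl _
  | @cons u a w h q ih =>
    intro hs hx hy
    have ha : a ∈ s := hs a (by simp [SimpleGraph.Walk.support_cons])
    have hadj : (T.induce s).Adj ⟨u, hx⟩ ⟨a, ha⟩ := h
    exact hadj.reachable.trans
      (ih (fun z hz => hs z (by simp [SimpleGraph.Walk.support_cons, hz])) ha hy)

open SimpleGraph in
lemma aux_mid {ι : Type} {T : SimpleGraph ι} (hac : T.IsAcyclic)
    {x y t : ι} (p : T.Walk x y) (hp : p.IsPath) (ht : t ∈ p.support) (hx : t ≠ x)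
    (hy : t ≠ y) :
    ∃ a b, T.Adj t a ∧ T.Adj t b ∧ a ≠ b ∧
      (T.deleteEdges {s(a,t)}).Reachable x a ∧
      ¬ (T.deleteEdges {s(a,t)}).Reachable y a := by
  classical
  have hqp : (p.takeUntil t ht).IsPath := hp.takeUntil ht
  have hrp : (p.dropUntil t ht).IsPath := hp.dropUntil ht
  have hqnil : ¬ (p.takeUntil t ht).reverse.Nil := Walk.not_nil_of_ne hx
  have hrnil : ¬ (p.dropUntil t ht).Nil := Walk.not_nil_of_ne hy
  obtain ⟨a, hta, qt, hq⟩ := Walk.not_nil_iff.mp hqnil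
  obtain ⟨b, htb, rt, hr⟩ := Walk.not_nil_iff.mp hrnil
  have hqrevp : ((p.takeUntil t ht).reverse).IsPath := hqp.reverse
  rw [hq, Walk.cons_isPath_iff] at hqrevp
  rw [hr, Walk.cons_isPath_iff] at hrp
  -- a ≠ b
  have hdisj : List.Disjoint (p.takeUntil t ht).support (p.dropUntil t ht).support.tail := by
    apply List.disjoint_of_nodup_append
    rw [← Walk.support_append, p.take_spec ht]
    exact hp.support_nodup
  have haq : a ∈ (p.takeUntil t ht).support := by
    rw [← List.mem_reverse, ← Walk.support_reverse, hq, Walk.support_cons]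
    exact List.mem_cons_of_mem _ qt.start_mem_support
  have hbr : b ∈ (p.dropUntil t ht).support.tail := by
    rw [hr, Walk.support_cons]
    exact rt.start_mem_support
  have hab : a ≠ b := by
    intro hh
    exact hdisj haq (hh ▸ hbr)
  -- reachability of x
  have hqt_edges : ∀ e ∈ qt.edges, e ∉ ({s(a,t)} : Set (Sym2 ι)) := by
    intro e he hmem
    rw [Set.mem_singleton_iff] at hmem
    subst hmem
    exact hqrevp.2 (qt.snd_mem_support_of_mem_edges he)
  have hreach : (T.deleteEdges {s(a,t)}).Reachable x a :=
    ⟨(qt.toDeleteEdges {s(a,t)} hqt_edges).reverse⟩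
  refine ⟨a, b, hta, htb, hab, hreach, ?_⟩
  intro hya
  have hrt_edges : ∀ e ∈ rt.edges, e ∉ ({s(a,t)} : Set (Sym2 ι)) := by
    intro e he hmem
    rw [Set.mem_singleton_iff] at hmem
    subst hmem
    exact hrp.2 (rt.snd_mem_support_of_mem_edges he)
  have hwalk2 : (T.deleteEdges {s(a,t)}).Reachable b y :=
    ⟨rt.toDeleteEdges {s(a,t)} hrt_edges⟩
  have hadj2 : (T.deleteEdges {s(a,t)}).Adj t b := by
    rw [SimpleGraph.deleteEdges_adj]
    refine ⟨htb, ?_⟩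
    rw [Set.mem_singleton_iff, Sym2.eq_iff]
    rintro (⟨h1, h2⟩ | ⟨h1, h2⟩)
    · exact hta.ne h1
    · exact hab h2.symm
  have hchain : (T.deleteEdges {s(a,t)}).Reachable t a :=
    (hadj2.reachable.trans hwalk2).trans hya
  have hbridge := (SimpleGraph.isAcyclic_iff_forall_edge_isBridge.mp hac)
    ((T.mem_edgeSet).mpr hta.symm)
  exact (SimpleGraph.isBridge_iff.mp hbridge) hchain.symm

lemma aux_indep_le [Fintype V] (G : SimpleGraph V) {d : ℕ} (h : alphaLoc G ≤ d)
    {y : V} {S : Set V} (hS : S ⊆ cNbhd G y) (hi : IndepSet G S) : S.ncard ≤ d := by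
  have hmem : S.ncard ∈ {n | ∃ v, ∃ S ⊆ cNbhd G v, IndepSet G S ∧ S.ncard = n} :=
    ⟨y, S, hS, hi, rfl⟩
  have hbdd : BddAbove {n | ∃ v, ∃ S ⊆ cNbhd G v, IndepSet G S ∧ S.ncard = n} := by
    refine ⟨Fintype.card V, ?_⟩
    rintro n ⟨v, S', hS', hi', rfl⟩
    have := Set.ncard_le_ncard (Set.subset_univ S') Set.finite_univ
    rwa [Set.ncard_univ, Nat.card_eq_fintype_card] at this
  exact le_trans (le_csSup hbdd hmem) h

lemma aux_cutrank_cover [Fintype V] (G : SimpleGraph V) (X : Set V) (k : ℕ)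
    (h : cutrank G X ≤ k) :
    ∃ Y : Set V, Y.Finite ∧ Y.ncard ≤ k ∧
      ∀ v ∈ X, ∀ w, w ∉ X → G.Adj v w → ∃ y ∈ Y, G.Adj v y := by
  unfold cutrank at h
  letI : Fintype ↥(Xᶜ) := Fintype.ofFinite _
  rw [Matrix.rank_eq_finrank_span_cols] at h
  obtain ⟨s, hsfin, hscard, hscov⟩ := aux_matrix_cover _ k h
  refine ⟨Subtype.val '' s, hsfin.image _, le_trans (Set.ncard_image_le hsfin) hscard, ?_⟩
  intro v hv w hw hvw
  obtain ⟨y', hy's, hy'⟩ := hscov ⟨v, hv⟩ ⟨w, hw⟩ (by simp [Matrix.of_apply, hvw])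
  refine ⟨y'.1, ⟨y', hy's, rfl⟩, ?_⟩
  by_contra hna
  exact hy' (by simp [Matrix.of_apply, hna])

theorem stmt19 [Fintype V] (G : SimpleGraph V) (d k : ℕ) (hd : 0 < d) (hk : 0 < k)
    (halpha : alphaLoc G ≤ d) (hrw : HasRankDecompOfWidth G k) :
    alphaTW G ≤ 3 * d * k := by
  classical
  obtain ⟨ι, T, δ, hT, hδ, hleaf, hdeg, hcut⟩ := hrw
  apply Nat.sInf_le
  let P : ∀ x y : ι, T.Walk x y := fun x y => ((hT.1.preconnected x y).some.toPath : T.Path x y).1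
  have hPp : ∀ x y, (P x y).IsPath := fun x y => ((hT.1.preconnected x y).some.toPath).2
  let β : ι → Set V := fun t => {v | δ v = t ∨ ∃ w, G.Adj v w ∧ t ∈ (P (δ v) (δ w)).support}
  have hmemβ : ∀ v, v ∈ β (δ v) := fun v => Or.inl rfl
  refine ⟨ι, T, β, ⟨hT, fun v => ⟨δ v, hmemβ v⟩, ?_, ?_⟩, ?_⟩
  · -- edges
    intro v w hvw
    exact ⟨δ v, hmemβ v, Or.inr ⟨v, hvw.symm, SimpleGraph.Walk.end_mem_support _⟩⟩
  · -- subtree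
    intro v
    have key : ∀ t (ht : v ∈ β t),
        (T.induce {t | v ∈ β t}).Reachable ⟨δ v, hmemβ v⟩ ⟨t, ht⟩ := by
      intro t ht
      rcases hht : ht with h | ⟨w, hw, hts⟩
      · subst h; exact SimpleGraph.Reachable.refl _
      · have hsup : ∀ z ∈ ((P (δ v) (δ w)).takeUntil t hts).support, z ∈ {t | v ∈ β t} :=
          fun z hz => Or.inr ⟨w, hw, (P (δ v) (δ w)).support_takeUntil_subset hts hz⟩
        exact aux_induce_reachable _ hsup (hmemβ v) ht
    haveI : Nonempty ↥{t | v ∈ β t} := ⟨⟨δ v, hmemβ v⟩⟩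
    refine ⟨?_⟩
    rintro ⟨t1, h1⟩ ⟨t2, h2⟩
    exact (key t1 h1).symm.trans (key t2 h2)
  · -- width
    intro t S hS hind
    rcases hdeg t with h1 | h3
    · -- leaf node
      obtain ⟨u, hu⟩ := (hleaf t).mp h1
      have hsub : S ⊆ cNbhd G u := by
        intro v hv
        rcases hS hv with h | ⟨w, hw, hts⟩
        · have : v = u := hδ (h.trans hu.symm)
          exact this ▸ Set.mem_insert _ _
        · by_cases hv1 : t = δ v
          · have : u = v := hδ (hu.trans hv1)
            exact this ▸ Set.mem_insert _ _
          by_cases hv2 : t = δ w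
          · have huw : u = w := hδ (hu.trans hv2)
            subst huw
            exact Set.mem_insert_of_mem _ hw.symm
          · exfalso
            obtain ⟨a, b, hta, htb, hab, -, -⟩ :=
              aux_mid hT.2 _ (hPp (δ v) (δ w)) hts hv1 hv2
            have hfin : (T.neighborSet t).Finite :=
              Set.finite_of_ncard_ne_zero (by rw [h1]; norm_num)
            have : 1 < (T.neighborSet t).ncard :=
              (Set.one_lt_ncard hfin).mpr ⟨a, hta, b, htb, hab⟩
            omega
      have := aux_indep_le G halpha hsub hind
      nlinarith
    · -- internal node
      have hnol : ∀ u : V, δ u ≠ t := by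
        intro u hu
        have := (hleaf t).mpr ⟨u, hu⟩
        omega
      have hgen : ∀ a, T.Adj t a → ∃ Y : Set V, Y.Finite ∧ Y.ncard ≤ k ∧
          ∀ v w : V, G.Adj v w → (T.deleteEdges {s(a,t)}).Reachable (δ v) a →
            ¬ (T.deleteEdges {s(a,t)}).Reachable (δ w) a → ∃ y ∈ Y, G.Adj v y := by
        intro a ha
        obtain ⟨Y, hf, hk', hcov⟩ := aux_cutrank_cover G
          {u | (T.deleteEdges {s(a,t)}).Reachable (δ u) a} k (hcut a t ha.symm)
        exact ⟨Y, hf, hk', fun v w hvw hvr hwr => hcov v hvr w hwr hvw⟩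
      obtain ⟨a₁, a₂, a₃, h12, h13, h23, hN⟩ := Set.ncard_eq_three.mp h3
      have ha₁ : T.Adj t a₁ := by
        have : a₁ ∈ T.neighborSet t := by rw [hN]; simp
        exact this
      have ha₂ : T.Adj t a₂ := by
        have : a₂ ∈ T.neighborSet t := by rw [hN]; simp
        exact this
      have ha₃ : T.Adj t a₃ := by
        have : a₃ ∈ T.neighborSet t := by rw [hN]; simp
        exact this
      obtain ⟨Y₁, hf₁, hk₁, hc₁⟩ := hgen a₁ ha₁
      obtain ⟨Y₂, hf₂, hk₂, hc₂⟩ := hgen a₂ ha₂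
      obtain ⟨Y₃, hf₃, hk₃, hc₃⟩ := hgen a₃ ha₃
      have hScov : ∀ v ∈ S, (∃ y ∈ Y₁, G.Adj v y) ∨ (∃ y ∈ Y₂, G.Adj v y) ∨
          (∃ y ∈ Y₃, G.Adj v y) := by
        intro v hv
        rcases hS hv with h | ⟨w, hw, hts⟩
        · exact absurd h (hnol v)
        · have hv1 : t ≠ δ v := fun hh => hnol v hh.symm
          have hv2 : t ≠ δ w := fun hh => hnol w hh.symm
          obtain ⟨a, b, hta, htb, hab, hra, hnb⟩ :=
            aux_mid hT.2 _ (hPp (δ v) (δ w)) hts hv1 hv2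
          have haN : a ∈ T.neighborSet t := hta
          rw [hN] at haN
          rcases haN with rfl | rfl | rfl
          · exact Or.inl (hc₁ v w hw hra hnb)
          · exact Or.inr (Or.inl (hc₂ v w hw hra hnb))
          · exact Or.inr (Or.inr (hc₃ v w hw hra hnb))
      have hcount : ∀ (Y : Set V), Y.Finite → Y.ncard ≤ k →
          ∀ S' : Set V, S' ⊆ S → (∀ v ∈ S', ∃ y ∈ Y, G.Adj v y) → S'.ncard ≤ k * d := by
        intro Y hYf hYk S' hS'S hmem
        have hsub : S' ⊆ ⋃ y ∈ Y, cNbhd G y := by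
          intro v hv
          obtain ⟨y, hy, hadj⟩ := hmem v hv
          exact Set.mem_biUnion hy (Set.mem_insert_of_mem _ hadj.symm)
        have hbd : ∀ y ∈ Y, (S' ∩ cNbhd G y).ncard ≤ d := by
          intro y hy
          refine aux_indep_le G halpha Set.inter_subset_right ?_
          intro x hx x' hx'
          exact hind x (hS'S hx.1) x' (hS'S hx'.1)
        exact le_trans (aux_cover_count (cNbhd G) d Y hYf S' (Set.toFinite _) hsub hbd)
          (Nat.mul_le_mul_right d hYk)
      have hsplit : S ⊆ {v ∈ S | ∃ y ∈ Y₁, G.Adj v y} ∪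
          ({v ∈ S | ∃ y ∈ Y₂, G.Adj v y} ∪ {v ∈ S | ∃ y ∈ Y₃, G.Adj v y}) := by
        intro v hv
        rcases hScov v hv with h | h | h
        · exact Or.inl ⟨hv, h⟩
        · exact Or.inr (Or.inl ⟨hv, h⟩)
        · exact Or.inr (Or.inr ⟨hv, h⟩)
      have e₁ := hcount Y₁ hf₁ hk₁ _ (Set.sep_subset _ _) (fun v hv => hv.2)
      have e₂ := hcount Y₂ hf₂ hk₂ _ (Set.sep_subset _ _) (fun v hv => hv.2)
      have e₃ := hcount Y₃ hf₃ hk₃ _ (Set.sep_subset _ _) (fun v hv => hv.2)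
      have htot := le_trans (Set.ncard_le_ncard hsplit (Set.toFinite _))
        (le_trans (Set.ncard_union_le _ _)
          (Nat.add_le_add le_rfl (Set.ncard_union_le _ _)))
      have hfin2 : S.ncard ≤ k * d + (k * d + k * d) :=
        le_trans htot (Nat.add_le_add e₁ (Nat.add_le_add e₂ e₃))
      rw [show k * d + (k * d + k * d) = 3 * d * k from by ring] at hfin2
      exact hfin2
end
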